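/- (Spectrum of the next-generation matrix for the demographic model.) Let n ≥ 1, let A be an n×n real sub-generator matrix, α ∈ ℝⁿ a probability vector, μ, γ_V, γ_R, ρ_J, μ_J > 0, and φ_J, φ_V ≥ 0 with φ_J < ρ_J + μ_J. On the (n+3)-element index set {J} ⊕ {1,…,n} ⊕ {V} ⊕ {R}, define the block matrices F (whose only nonzero block is the B-rows × J-column block ρ_J·α) and 𝕍 with block rows [(ρ_J+μ_J)−φ_J, 0, −φ_V, 0], [0, μI−Aᵀ, 0, −γ_R·α], [0, (A𝟙)ᵀ, μ+γ_V, 0], [0, 0, −γ_V, μ+γ_R]. Then 𝕍 is invertible and the characteristic polynomial of F·𝕍⁻¹ equals Xⁿ⁺² · (X − N₀), where N₀ = (ρ_J/((ρ_J+μ_J)−φ_J)) · (φ_V/(μ+γ_V)) · τ · n_G is the basic offspring number; in particular the spectral radius of the next-generation matrix F·𝕍⁻¹ equals N₀. -/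

import Mathlib

open Matrix Polynomial

/-- Index set of the demographic model: juveniles `J`, biting stages `B₁,…,Bₙ`,
ovipositing `V`, resting `R`. -/
abbrev DemogIdx (n : ℕ) := Fin 1 ⊕ (Fin n ⊕ (Fin 1 ⊕ Fin 1))

/-- The new-recruitment matrix `F`: its only nonzero block is the `B`-rows ×
`J`-column block `ρ_J · α`. -/
def Fmat {n : ℕ} (α : Fin n → ℝ) (ρJ : ℝ) : Matrix (DemogIdx n) (DemogIdx n) ℝ :=
  Matrix.of fun i j =>
    match i, j with
    | Sum.inr (Sum.inl k), Sum.inl _ => ρJ * α k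
    | _, _ => 0

/-- The net-transition matrix `𝕍` with block rows
`[(ρ_J+μ_J)−φ_J, 0, −φ_V, 0]`, `[0, μI−Aᵀ, 0, −γ_R α]`, `[0, (A𝟙)ᵀ, μ+γ_V, 0]`,
`[0, 0, −γ_V, μ+γ_R]`. -/
def Vmat {n : ℕ} (A : Matrix (Fin n) (Fin n) ℝ) (α : Fin n → ℝ)
    (μ γV γR ρJ μJ φJ φV : ℝ) : Matrix (DemogIdx n) (DemogIdx n) ℝ :=
  Matrix.of fun i j =>
    match i, j with
    | Sum.inl _, Sum.inl _ => (ρJ + μJ) - φJ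
    | Sum.inl _, Sum.inr (Sum.inr (Sum.inl _)) => -φV
    | Sum.inr (Sum.inl k), Sum.inr (Sum.inl l) =>
        (μ • (1 : Matrix (Fin n) (Fin n) ℝ) - Aᵀ) k l
    | Sum.inr (Sum.inl k), Sum.inr (Sum.inr (Sum.inr _)) => -(γR * α k)
    | Sum.inr (Sum.inr (Sum.inl _)), Sum.inr (Sum.inl l) => (A *ᵥ (1 : Fin n → ℝ)) l
    | Sum.inr (Sum.inr (Sum.inl _)), Sum.inr (Sum.inr (Sum.inl _)) => μ + γV
    | Sum.inr (Sum.inr (Sum.inr _)), Sum.inr (Sum.inr (Sum.inl _)) => -γV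
    | Sum.inr (Sum.inr (Sum.inr _)), Sum.inr (Sum.inr (Sum.inr _)) => μ + γR
    | _, _ => 0

/-- The survival-and-exit probability `τ = αᵀ (μI − A)⁻¹ ((−A)𝟙)`. -/
noncomputable def tau {n : ℕ} (A : Matrix (Fin n) (Fin n) ℝ) (α : Fin n → ℝ) (μ : ℝ) : ℝ :=
  α ⬝ᵥ ((μ • (1 : Matrix (Fin n) (Fin n) ℝ) - A)⁻¹ *ᵥ ((-A) *ᵥ (1 : Fin n → ℝ)))

/-- The average number of gonotrophic cycles `n_G`. -/
noncomputable def nG {n : ℕ} (A : Matrix (Fin n) (Fin n) ℝ) (α : Fin n → ℝ)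
    (μ γV γR : ℝ) : ℝ :=
  (1 - tau A α μ * (γR / (μ + γR)) * (γV / (μ + γV)))⁻¹


lemma my_eval_charpoly {m : Type*} [Fintype m] [DecidableEq m] (B : Matrix m m ℝ) (r : ℝ) :
    (B.charpoly).eval r = (r • (1 : Matrix m m ℝ) - B).det := by
  rw [Matrix.charpoly, ← Polynomial.coe_evalRingHom, RingHom.map_det]
  congr 1
  ext i j
  by_cases h : i = j
  · subst h
    simp [charmatrix_apply_eq, Matrix.one_apply]
  · simp [charmatrix_apply_ne _ _ _ h, Matrix.one_apply, h]

lemma my_mem_spectrum_iff {m : Type*} [Fintype m] [DecidableEq m] (B : Matrix m m ℝ) (r : ℝ) :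
    r ∈ spectrum ℝ B ↔ (B.charpoly).eval r = 0 := by
  rw [spectrum.mem_iff, Algebra.algebraMap_eq_smul_one, my_eval_charpoly]
  rw [Matrix.isUnit_iff_isUnit_det, isUnit_iff_ne_zero, not_not]

lemma my_charpoly_vecMulVec {m : Type*} [Fintype m] [DecidableEq m] [Nonempty m]
    (c x : m → ℝ) :
    (Matrix.vecMulVec c x).charpoly =
      X ^ (Fintype.card m - 1) * (X - C (x ⬝ᵥ c)) := by
  have hcard : 1 ≤ Fintype.card m := Fintype.card_pos
  apply Polynomial.eq_of_infinite_eval_eq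
  apply Set.Infinite.mono (s := {(0:ℝ)}ᶜ)
  · intro r hr
    have hr0 : r ≠ 0 := hr
    have h1 : r • (1 : Matrix m m ℝ) - Matrix.vecMulVec c x
        = r • ((1 : Matrix m m ℝ) - Matrix.vecMulVec (r⁻¹ • c) x) := by
      ext i j
      simp only [Matrix.sub_apply, Matrix.smul_apply, Matrix.vecMulVec_apply, Pi.smul_apply,
        smul_eq_mul]
      field_simp
    have h2 : ((1 : Matrix m m ℝ) - Matrix.vecMulVec (r⁻¹ • c) x).det
        = 1 - x ⬝ᵥ (r⁻¹ • c) := by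
      rw [Matrix.vecMulVec_eq (Fin 1), Matrix.det_one_sub_mul_comm]
      rw [Matrix.det_unique]
      simp [Matrix.one_apply, Matrix.replicateRow_mul_replicateCol_apply]
    have hd : x ⬝ᵥ (r⁻¹ • c) = r⁻¹ * (x ⬝ᵥ c) := by
      simp [dotProduct, Finset.mul_sum, mul_left_comm]
    have hpow : r ^ Fintype.card m = r ^ (Fintype.card m - 1) * r := by
      conv_lhs => rw [show Fintype.card m = (Fintype.card m - 1) + 1 by omega]
      rw [pow_succ]
    simp only [Set.mem_setOf_eq, my_eval_charpoly, h1, Matrix.det_smul, h2, hd,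
      eval_mul, eval_pow, eval_X, eval_sub, eval_C, smul_eq_mul]
    rw [hpow]
    field_simp
  · exact (Set.finite_singleton 0).infinite_compl

/-- **Spectrum of the next-generation matrix for the demographic model.**
`𝕍` is invertible, the characteristic polynomial of `F·𝕍⁻¹` equals
`X^(n+2)·(X − N₀)`, and the spectral radius of `F·𝕍⁻¹` is the basic offspring
number `N₀`. -/
theorem ngm_demographic_charpoly_and_spectralRadius
    (n : ℕ) (hn : 1 ≤ n) (A : Matrix (Fin n) (Fin n) ℝ)
    (hoff : ∀ i j, i ≠ j → 0 ≤ A i j)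
    (hrow : ∀ i, ∑ j, A i j ≤ 0)
    (α : Fin n → ℝ) (hα0 : ∀ i, 0 ≤ α i) (hα1 : ∑ i, α i = 1)
    (μ γV γR ρJ μJ φJ φV : ℝ)
    (hμ : 0 < μ) (hγV : 0 < γV) (hγR : 0 < γR) (hρJ : 0 < ρJ) (hμJ : 0 < μJ)
    (hφJ : 0 ≤ φJ) (hφV : 0 ≤ φV) (hφJ' : φJ < ρJ + μJ) :
    IsUnit (Vmat A α μ γV γR ρJ μJ φJ φV) ∧
    (Fmat α ρJ * (Vmat A α μ γV γR ρJ μJ φJ φV)⁻¹).charpoly =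
      Polynomial.X ^ (n + 2) *
        (Polynomial.X -
          Polynomial.C ((ρJ / ((ρJ + μJ) - φJ)) * (φV / (μ + γV)) *
            tau A α μ * nG A α μ γV γR)) ∧
    spectralRadius ℝ (Fmat α ρJ * (Vmat A α μ γV γR ρJ μJ φJ φV)⁻¹) =
      ENNReal.ofReal ((ρJ / ((ρJ + μJ) - φJ)) * (φV / (μ + γV)) *
        tau A α μ * nG A α μ γV γR) := by
  haveI : Nonempty (Fin n) := ⟨⟨0, by omega⟩⟩
  set M1 : Matrix (Fin n) (Fin n) ℝ := μ • (1 : Matrix (Fin n) (Fin n) ℝ) - A with hM1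
  -- determinant nonzero
  have hdet : M1.det ≠ 0 := by
    apply det_ne_zero_of_sum_row_lt_diag
    intro k
    have hsum : A k k + ∑ j ∈ Finset.univ.erase k, A k j ≤ 0 := by
      rw [Finset.add_sum_erase _ _ (Finset.mem_univ k)]; exact hrow k
    have hAkk : A k k ≤ 0 := by
      have : 0 ≤ ∑ j ∈ Finset.univ.erase k, A k j :=
        Finset.sum_nonneg fun j hj => hoff k j (Ne.symm (Finset.ne_of_mem_erase hj))
      linarith
    have h1 : ∀ j ∈ Finset.univ.erase k, ‖M1 k j‖ = A k j := by
      intro j hj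
      have hjk : j ≠ k := Finset.ne_of_mem_erase hj
      have : M1 k j = -A k j := by
        simp [hM1, Matrix.sub_apply, Matrix.smul_apply, Matrix.one_apply, (Ne.symm hjk)]
      rw [this, norm_neg, Real.norm_eq_abs, abs_of_nonneg (hoff k j (Ne.symm hjk))]
    have h2 : ‖M1 k k‖ = μ - A k k := by
      have : M1 k k = μ - A k k := by
        simp [hM1, Matrix.sub_apply, Matrix.smul_apply, Matrix.one_apply]
      rw [this, Real.norm_eq_abs, abs_of_pos (by linarith)]
    rw [h2, Finset.sum_congr rfl h1]
    linarith
  have hdU : IsUnit M1.det := isUnit_iff_ne_zero.2 hdet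
  set y : Fin n → ℝ := M1⁻¹ *ᵥ ((-A) *ᵥ (1 : Fin n → ℝ)) with hy
  have hMy : M1 *ᵥ y = (-A) *ᵥ (1 : Fin n → ℝ) := by
    rw [hy, Matrix.mulVec_mulVec, Matrix.mul_nonsing_inv _ hdU, Matrix.one_mulVec]
  have hMy' : ∀ i, μ * y i - ∑ j, A i j * y j = -∑ j, A i j := by
    intro i
    have h := congrFun hMy i
    have hL : (M1 *ᵥ y) i = μ * y i - ∑ j, A i j * y j := by
      simp only [hM1, Matrix.mulVec, dotProduct, Matrix.sub_apply, Matrix.smul_apply,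
        Matrix.one_apply, smul_eq_mul, sub_mul, mul_ite, mul_one, mul_zero, ite_mul, zero_mul,
        Finset.sum_sub_distrib, Finset.sum_ite_eq, Finset.mem_univ, if_true]
    have hR : ((-A) *ᵥ (1 : Fin n → ℝ)) i = -∑ j, A i j := by
      simp [Matrix.neg_mulVec, Matrix.mulVec, dotProduct]
    rw [hL, hR] at h
    exact h
  have hy0 : ∀ i, 0 ≤ y i := by
    obtain ⟨i, _, hi⟩ := Finset.exists_min_image (Finset.univ : Finset (Fin n)) y
      ⟨Classical.arbitrary _, Finset.mem_univ _⟩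
    intro j
    suffices h0 : 0 ≤ y i from le_trans h0 (hi j (Finset.mem_univ j))
    by_contra hneg
    push_neg at hneg
    have hle : (∑ j, A i j) * y i ≤ ∑ j, A i j * y j := by
      rw [Finset.sum_mul]
      apply Finset.sum_le_sum
      intro j _
      by_cases h : j = i
      · subst h; exact le_refl _
      · exact mul_le_mul_of_nonneg_left (hi j (Finset.mem_univ j)) (hoff i j (Ne.symm h))
    have heq := hMy' i
    have hprod : 0 ≤ (∑ j, A i j) * (y i - 1) := by
      have := mul_nonneg (neg_nonneg.2 (hrow i)) (neg_nonneg.2 (show y i - 1 ≤ 0 by linarith))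
      nlinarith
    nlinarith [mul_pos hμ (neg_pos.2 hneg)]
  have hy1 : ∀ i, y i ≤ 1 := by
    obtain ⟨i, _, hi⟩ := Finset.exists_max_image (Finset.univ : Finset (Fin n)) y
      ⟨Classical.arbitrary _, Finset.mem_univ _⟩
    intro j
    suffices h0 : y i ≤ 1 from le_trans (hi j (Finset.mem_univ j)) h0
    by_contra hneg
    push_neg at hneg
    have hle : ∑ j, A i j * y j ≤ (∑ j, A i j) * y i := by
      rw [Finset.sum_mul]
      apply Finset.sum_le_sum
      intro j _
      by_cases h : j = i
      · subst h; exact le_refl _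
      · exact mul_le_mul_of_nonneg_left (hi j (Finset.mem_univ j)) (hoff i j (Ne.symm h))
    have heq := hMy' i
    have hprod : (∑ j, A i j) * (y i - 1) ≤ 0 :=
      mul_nonpos_of_nonpos_of_nonneg (hrow i) (by linarith)
    nlinarith
  have hτ : tau A α μ = ∑ i, α i * y i := rfl
  have hτ0 : 0 ≤ tau A α μ := by
    rw [hτ]; exact Finset.sum_nonneg fun i _ => mul_nonneg (hα0 i) (hy0 i)
  have hτ1 : tau A α μ ≤ 1 := by
    rw [hτ, ← hα1]
    exact Finset.sum_le_sum fun i _ => mul_le_of_le_one_right (hα0 i) (hy1 i)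
  set τ : ℝ := tau A α μ with hτdef
  set D : ℝ := (μ + γV) * (μ + γR) - γV * γR * τ with hD
  have hDpos : 0 < D := by nlinarith [mul_pos hγV hγR, mul_pos hμ hγR, mul_pos hμ hγV, mul_pos hμ hμ]
  have hnG : nG A α μ γV γR = (μ + γV) * (μ + γR) / D := by
    rw [nG]
    rw [show (1 - tau A α μ * (γR / (μ + γR)) * (γV / (μ + γV)))
        = D / ((μ + γV) * (μ + γR)) by
      rw [hD]; field_simp; ring]
    rw [inv_div]
  have hdetT : (M1ᵀ).det ≠ 0 := by rwa [Matrix.det_transpose]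
  have hdUT : IsUnit (M1ᵀ).det := isUnit_iff_ne_zero.2 hdetT
  have hM1T : (μ • (1 : Matrix (Fin n) (Fin n) ℝ) - Aᵀ) = M1ᵀ := by
    rw [hM1, Matrix.transpose_sub, Matrix.transpose_smul, Matrix.transpose_one]
  have hkey : (A *ᵥ (1 : Fin n → ℝ)) ⬝ᵥ ((M1ᵀ)⁻¹ *ᵥ α) = -τ := by
    rw [← Matrix.transpose_nonsing_inv, Matrix.mulVec_transpose, dotProduct_comm,
      ← dotProduct_mulVec]
    have hτ' : τ = -(α ⬝ᵥ (M1⁻¹ *ᵥ (A *ᵥ (1 : Fin n → ℝ)))) := by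
      rw [hτdef]
      show tau A α μ = _
      rw [tau, ← hM1, Matrix.neg_mulVec, Matrix.mulVec_neg, dotProduct_neg]
    rw [hτ']; ring
  have hker : ∀ u : DemogIdx n → ℝ, Vmat A α μ γV γR ρJ μJ φJ φV *ᵥ u = 0 → u = 0 := by
    intro u hu
    have hrJ := congrFun hu (Sum.inl 0)
    have hrB := fun k => congrFun hu (Sum.inr (Sum.inl k))
    have hrV := congrFun hu (Sum.inr (Sum.inr (Sum.inl 0)))
    have hrR := congrFun hu (Sum.inr (Sum.inr (Sum.inr 0)))
    simp only [Vmat, Matrix.mulVec, dotProduct, Fintype.sum_sum_type, Fin.sum_univ_one,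
      Matrix.of_apply, Pi.zero_apply, zero_mul, Finset.sum_const_zero, add_zero, zero_add,
      neg_mul, mul_zero] at hrJ hrB hrV hrR
    set uJ := u (Sum.inl 0) with huJd
    set uB : Fin n → ℝ := fun k => u (Sum.inr (Sum.inl k)) with huBd
    set uV := u (Sum.inr (Sum.inr (Sum.inl 0))) with huVd
    set uR := u (Sum.inr (Sum.inr (Sum.inr 0))) with huRd
    have hB : M1ᵀ *ᵥ uB = (γR * uR) • α := by
      ext k
      have h := hrB k
      simp only [hM1T] at h
      simp only [Matrix.mulVec, dotProduct, Pi.smul_apply, smul_eq_mul, huBd]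
      linarith [h]
    have huB : uB = (γR * uR) • ((M1ᵀ)⁻¹ *ᵥ α) := by
      have h1 : (M1ᵀ)⁻¹ *ᵥ (M1ᵀ *ᵥ uB) = uB := by
        rw [Matrix.mulVec_mulVec, Matrix.nonsing_inv_mul _ hdUT, Matrix.one_mulVec]
      rw [← h1, hB, Matrix.mulVec_smul]
    have hAB : ∑ x, (∑ z, A x z * (1 : Fin n → ℝ) z) * uB x
        = (A *ᵥ (1 : Fin n → ℝ)) ⬝ᵥ uB := rfl
    have hV2 : -(γR * uR * τ) + (μ + γV) * uV = 0 := by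
      have h := hrV
      rw [hAB, huB, dotProduct_smul, hkey] at h
      simpa [smul_eq_mul, mul_comm, mul_assoc, mul_left_comm] using h
    have hDuV : D * uV = 0 := by
      rw [hD]; linear_combination (μ + γR) * hV2 + γR * τ * hrR
    have huV : uV = 0 := by
      rcases mul_eq_zero.1 hDuV with h | h
      · exact absurd h hDpos.ne'
      · exact h
    have huR : uR = 0 := by
      rw [huV] at hrR
      have : (μ + γR) * uR = 0 := by linarith [hrR]
      rcases mul_eq_zero.1 this with h | h
      · linarith
      · exact h
    have huB0 : uB = 0 := by rw [huB, huR]; simp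
    have huJ : uJ = 0 := by
      rw [huV] at hrJ
      have : (ρJ + μJ - φJ) * uJ = 0 := by linarith [hrJ]
      rcases mul_eq_zero.1 this with h | h
      · linarith
      · exact h
    funext i
    rcases i with i | (k | (i | i))
    · rw [Fin.fin_one_eq_zero i]; exact huJ
    · exact congrFun huB0 k
    · rw [Fin.fin_one_eq_zero i]; exact huV
    · rw [Fin.fin_one_eq_zero i]; exact huR
  have hUV : IsUnit (Vmat A α μ γV γR ρJ μJ φJ φV) := by
    rw [← Matrix.mulVec_injective_iff_isUnit]
    intro u w huw
    have h0 : Vmat A α μ γV γR ρJ μJ φJ φV *ᵥ (u - w) = 0 := by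
      rw [Matrix.mulVec_sub, huw, sub_self]
    exact sub_eq_zero.1 (hker _ h0)
  have hρφ : (0:ℝ) < ρJ + μJ - φJ := by linarith
  set xJ : ℝ := (ρJ + μJ - φJ)⁻¹ with hxJ
  set xV : ℝ := xJ * φV * (μ + γR) / D with hxV
  set xR : ℝ := xJ * φV * γR * τ / D with hxR
  set xB : Fin n → ℝ := fun k => xV * y k with hxB
  set xvec : DemogIdx n → ℝ :=
    Sum.elim (fun _ => xJ) (Sum.elim xB (Sum.elim (fun _ => xV) (fun _ => xR))) with hxvec
  set dvec : DemogIdx n → ℝ := Sum.elim (fun _ => 1) (fun _ => 0) with hdvec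
  set cvec : DemogIdx n → ℝ :=
    Sum.elim (fun _ => 0) (Sum.elim (fun k => ρJ * α k) (fun _ => 0)) with hcvec
  have hcolB : ∀ l, ∑ k, xB k * (μ • (1 : Matrix (Fin n) (Fin n) ℝ) - Aᵀ) k l
      = -(xV * (A *ᵥ (1 : Fin n → ℝ)) l) := by
    intro l
    have h1 : ∑ k, xB k * (μ • (1 : Matrix (Fin n) (Fin n) ℝ) - Aᵀ) k l
        = xV * ((M1 *ᵥ y) l) := by
      rw [hM1T]
      simp only [Matrix.mulVec, dotProduct, hxB, Matrix.transpose_apply]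
      rw [Finset.mul_sum]
      exact Finset.sum_congr rfl fun k _ => by ring
    rw [h1, hMy]
    simp [Matrix.neg_mulVec]
  have hxrowV : xvec ᵥ* Vmat A α μ γV γR ρJ μJ φJ φV = dvec := by
    funext j
    rcases j with j | (l | (j | j))
    · simp only [Matrix.vecMul, dotProduct, Fintype.sum_sum_type, Fin.sum_univ_one,
        Vmat, Matrix.of_apply, hxvec, Sum.elim_inl, Sum.elim_inr, hdvec,
        mul_zero, Finset.sum_const_zero, add_zero, zero_add]
      exact inv_mul_cancel₀ hρφ.ne'
    · simp only [Matrix.vecMul, dotProduct, Fintype.sum_sum_type, Fin.sum_univ_one,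
        Vmat, Matrix.of_apply, hxvec, Sum.elim_inl, Sum.elim_inr, hdvec,
        mul_zero, Finset.sum_const_zero, add_zero, zero_add, zero_mul]
      rw [hcolB l]
      ring
    · simp only [Matrix.vecMul, dotProduct, Fintype.sum_sum_type, Fin.sum_univ_one,
        Vmat, Matrix.of_apply, hxvec, Sum.elim_inl, Sum.elim_inr, hdvec,
        mul_zero, Finset.sum_const_zero, add_zero, zero_add, zero_mul]
      rw [hxV, hxR]
      have hinv : D * D⁻¹ = 1 := mul_inv_cancel₀ hDpos.ne'
      simp only [div_eq_mul_inv]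
      linear_combination (xJ * φV) * hinv - (xJ * φV * D⁻¹) * hD
    · simp only [Matrix.vecMul, dotProduct, Fintype.sum_sum_type, Fin.sum_univ_one,
        Vmat, Matrix.of_apply, hxvec, Sum.elim_inl, Sum.elim_inr, hdvec,
        mul_zero, Finset.sum_const_zero, add_zero, zero_add, zero_mul]
      have hsum : ∑ k, xB k * -(γR * α k) = -(γR * xV * τ) := by
        rw [hτ]
        simp only [hxB]
        rw [Finset.mul_sum, ← Finset.sum_neg_distrib]
        exact Finset.sum_congr rfl fun k _ => by ring
      rw [hsum, hxV, hxR]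
      field_simp
      ring
  have hUVdet : IsUnit (Vmat A α μ γV γR ρJ μJ φJ φV).det :=
    (Matrix.isUnit_iff_isUnit_det _).1 hUV
  have hxrow : dvec ᵥ* (Vmat A α μ γV γR ρJ μJ φJ φV)⁻¹ = xvec := by
    have h := congrArg (fun z => z ᵥ* (Vmat A α μ γV γR ρJ μJ φJ φV)⁻¹) hxrowV
    simpa only [Matrix.vecMul_vecMul, Matrix.mul_nonsing_inv _ hUVdet, Matrix.vecMul_one]
      using h.symm
  have hFdecomp : Fmat α ρJ = Matrix.vecMulVec cvec dvec := by
    ext i j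
    rcases i with i | (k | (i | i)) <;> rcases j with j | (l | (j | j)) <;>
      simp [Fmat, Matrix.vecMulVec_apply, hcvec, hdvec]
  have hMdecomp : Fmat α ρJ * (Vmat A α μ γV γR ρJ μJ φJ φV)⁻¹
      = Matrix.vecMulVec cvec xvec := by
    rw [hFdecomp]
    ext i j
    rw [← hxrow]
    simp only [Matrix.mul_apply, Matrix.vecMulVec_apply, Matrix.vecMul, dotProduct]
    rw [Finset.mul_sum]
    exact Finset.sum_congr rfl fun k _ => by ring
  have htr : xvec ⬝ᵥ cvec = ρJ * xV * τ := by
    simp only [dotProduct, Fintype.sum_sum_type, Fin.sum_univ_one, hxvec, hcvec,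
      Sum.elim_inl, Sum.elim_inr, mul_zero, Finset.sum_const_zero, add_zero, zero_add]
    rw [hτ, Finset.mul_sum]
    simp only [hxB]
    exact Finset.sum_congr rfl fun k _ => by ring
  haveI : Nonempty (DemogIdx n) := ⟨Sum.inl 0⟩
  have hcard : Fintype.card (DemogIdx n) - 1 = n + 2 := by
    simp [Fintype.card_sum]
  have hN0eq : ρJ * xV * τ
      = ρJ / (ρJ + μJ - φJ) * (φV / (μ + γV)) * τ * nG A α μ γV γR := by
    rw [hnG, hxV, hxJ]
    field_simp
  have hchar : (Fmat α ρJ * (Vmat A α μ γV γR ρJ μJ φJ φV)⁻¹).charpoly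
      = X ^ (n + 2) * (X - C (ρJ * xV * τ)) := by
    rw [hMdecomp, my_charpoly_vecMulVec, htr, hcard]
  have hxV0 : 0 ≤ xV := by
    rw [hxV, hxJ]
    have : (0:ℝ) ≤ (ρJ + μJ - φJ)⁻¹ := inv_nonneg.2 hρφ.le
    exact div_nonneg (mul_nonneg (mul_nonneg this hφV) (by linarith)) hDpos.le
  have hT0 : 0 ≤ ρJ * xV * τ := mul_nonneg (mul_nonneg hρJ.le hxV0) hτ0
  refine ⟨hUV, ?_, ?_⟩
  · rw [hchar, hN0eq]
  · have hspec : spectrum ℝ (Fmat α ρJ * (Vmat A α μ γV γR ρJ μJ φJ φV)⁻¹)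
        = {0, ρJ * xV * τ} := by
      ext r
      rw [my_mem_spectrum_iff, hchar]
      simp only [eval_mul, eval_pow, eval_X, eval_sub, eval_C, mul_eq_zero,
        pow_eq_zero_iff (show n + 2 ≠ 0 by omega), sub_eq_zero,
        Set.mem_insert_iff, Set.mem_singleton_iff]
    rw [show (ρJ / ((ρJ + μJ) - φJ)) * (φV / (μ + γV)) * τ * nG A α μ γV γR
        = ρJ * xV * τ from hN0eq.symm]
    have hsr : spectralRadius ℝ (Fmat α ρJ * (Vmat A α μ γV γR ρJ μJ φJ φV)⁻¹)
        = ⨆ k ∈ spectrum ℝ (Fmat α ρJ * (Vmat A α μ γV γR ρJ μJ φJ φV)⁻¹),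
            (‖k‖₊ : ENNReal) := rfl
    rw [hsr, hspec, iSup_insert, iSup_singleton]
    simp only [nnnorm_zero, ENNReal.coe_zero]
    rw [← Real.enorm_eq_ofReal hT0]
    exact sup_eq_right.2 zero_le
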